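/- Let (C, d, U, D₁, D₂) and (C′, d′, U′, D₁′, D₂′) be Floer data over a field Λ, let (c, φ, μ, Δ₁, Δ₂) be a cobordism datum between them, and let ČW : Č → Č′ be as defined in the context. Then ČW is a chain map: ď′ ∘ ČW = ČW ∘ ď. -/

import Mathlib

noncomputable section

variable (Λ : Type*) (V : Type*) [Field Λ] [AddCommGroup V] [Module Λ V]

/-- A Floer datum over the field `Λ`. -/
structure FloerDatum where
  gr : ZMod 8 → Submodule Λ V
  internal : DirectSum.IsInternal gr
  d : V →ₗ[Λ] V
  U : V →ₗ[Λ] V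
  D₁ : V →ₗ[Λ] Λ
  D₂ : Λ →ₗ[Λ] V
  d_mem : ∀ (i : ZMod 8), ∀ v ∈ gr i, d v ∈ gr (i - 1)
  U_mem : ∀ (i : ZMod 8), ∀ v ∈ gr i, U v ∈ gr (i - 4)
  D₁_vanish : ∀ (i : ZMod 8), i ≠ 1 → ∀ v ∈ gr i, D₁ v = 0
  D₂_mem : ∀ a : Λ, D₂ a ∈ gr 4
  d_d : d ∘ₗ d = 0
  D₁_d : D₁ ∘ₗ d = 0
  d_D₂ : d ∘ₗ D₂ = 0
  U_rel : U ∘ₗ d - d ∘ₗ U + D₂ ∘ₗ D₁ = 0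

variable (V' : Type*) [AddCommGroup V'] [Module Λ V']
variable {Λ V V'}

/-- A cobordism datum between two Floer data. -/
structure CobordismDatum (F : FloerDatum Λ V) (F' : FloerDatum Λ V') where
  c : Λ
  φ : V →ₗ[Λ] V'
  μ : V →ₗ[Λ] V'
  Δ₁ : V →ₗ[Λ] Λ
  Δ₂ : Λ →ₗ[Λ] V'
  φ_mem : ∀ (i : ZMod 8), ∀ v ∈ F.gr i, φ v ∈ F'.gr i
  μ_mem : ∀ (i : ZMod 8), ∀ v ∈ F.gr i, μ v ∈ F'.gr (i - 3)
  Δ₁_vanish : ∀ (i : ZMod 8), i ≠ 0 → ∀ v ∈ F.gr i, Δ₁ v = 0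
  Δ₂_mem : ∀ a : Λ, Δ₂ a ∈ F'.gr 5
  rel_d : φ ∘ₗ F.d = F'.d ∘ₗ φ
  rel_D₁ : Δ₁ ∘ₗ F.d + c • F.D₁ = F'.D₁ ∘ₗ φ
  rel_D₂ : φ ∘ₗ F.D₂ = c • F'.D₂ - F'.d ∘ₗ Δ₂
  rel_U : μ ∘ₗ F.d + F'.d ∘ₗ μ + Δ₂ ∘ₗ F.D₁ + φ ∘ₗ F.U - F'.U ∘ₗ φ - F'.D₂ ∘ₗ Δ₁ = 0

variable {W : Type*} [AddCommGroup W] [Module Λ W]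
variable {M : Type*} [AddCommGroup M] [Module Λ M]

/-- `p = Σ aᵢ xⁱ ↦ Σ f i aᵢ`, as a linear map on polynomials. -/
def polySum (f : ℕ → (Λ →ₗ[Λ] W)) : Polynomial Λ →ₗ[Λ] W where
  toFun p := p.sum fun i a => f i a
  map_add' p q :=
    Polynomial.sum_add_index p q _ (fun i => map_zero (f i)) (fun i b c => map_add (f i) b c)
  map_smul' a p := by
    show (a • p).sum (fun i b => f i b) = a • p.sum fun i b => f i b
    rw [Polynomial.sum_smul_index p a _ (fun i => map_zero (f i)),
      Polynomial.sum, Polynomial.sum, Finset.smul_sum]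
    exact Finset.sum_congr rfl fun n _ => by rw [← smul_eq_mul, map_smul]

/-- The differential `d̂` on `Ĉ = C ⊕ Λ[x]`. -/
def hatd (F : FloerDatum Λ V) : (V × Polynomial Λ) →ₗ[Λ] (V × Polynomial Λ) :=
  ((F.d ∘ₗ LinearMap.fst Λ V (Polynomial Λ))
    - (polySum fun i => (F.U ^ i) ∘ₗ F.D₂) ∘ₗ LinearMap.snd Λ V (Polynomial Λ)).prod 0

/-- The map `X̂(α, p) = (U α, D₁ α + x·p)` on `Ĉ`. -/
def hatX (F : FloerDatum Λ V) : (V × Polynomial Λ) →ₗ[Λ] (V × Polynomial Λ) :=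
  (F.U ∘ₗ LinearMap.fst Λ V (Polynomial Λ)).prod
    ((Algebra.linearMap Λ (Polynomial Λ)) ∘ₗ F.D₁ ∘ₗ LinearMap.fst Λ V (Polynomial Λ)
      + (LinearMap.mulLeft Λ (Polynomial.X : Polynomial Λ)) ∘ₗ LinearMap.snd Λ V (Polynomial Λ))

/-- The cobordism map `ĈW : Ĉ → Ĉ′`. -/
def hatCW {F : FloerDatum Λ V} {F' : FloerDatum Λ V'} (G : CobordismDatum F F') :
    (V × Polynomial Λ) →ₗ[Λ] (V' × Polynomial Λ) :=
  (G.φ ∘ₗ LinearMap.fst Λ V (Polynomial Λ)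
    + (polySum fun i => (F'.U ^ i) ∘ₗ G.Δ₂
        + ∑ k ∈ Finset.range i, (F'.U ^ k) ∘ₗ G.μ ∘ₗ (F.U ^ (i - 1 - k)) ∘ₗ F.D₂)
        ∘ₗ LinearMap.snd Λ V (Polynomial Λ)).prod
  (G.c • LinearMap.snd Λ V (Polynomial Λ)
    + (polySum fun k =>
        (∑ i ∈ Finset.range k,
          (LinearMap.smulRight (F'.D₁ ∘ₗ (F'.U ^ (k - 1 - i)) ∘ₗ G.Δ₂)
              ((Polynomial.X : Polynomial Λ) ^ i)
            + LinearMap.smulRight (G.Δ₁ ∘ₗ (F.U ^ (k - 1 - i)) ∘ₗ F.D₂)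
              ((Polynomial.X : Polynomial Λ) ^ i)))
        + ∑ j ∈ Finset.range k, ∑ i ∈ Finset.range j,
            LinearMap.smulRight
              (F'.D₁ ∘ₗ (F'.U ^ (j - i - 1)) ∘ₗ G.μ ∘ₗ (F.U ^ (k - j - 1)) ∘ₗ F.D₂)
              ((Polynomial.X : Polynomial Λ) ^ i))
      ∘ₗ LinearMap.snd Λ V (Polynomial Λ))

/-- Package a family of `Λ`-linear coefficient functionals into a linear map to power series.
We use `PowerSeries Λ` (in the variable `x⁻¹`) as a model for `x⁻¹Λ[[x⁻¹]]`: a power series `q`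
represents the series `Σ_{n≥0} (coeff n q) x^{-(n+1)}`. -/
def toPS (c : ℕ → (M →ₗ[Λ] Λ)) : M →ₗ[Λ] PowerSeries Λ where
  toFun m := PowerSeries.mk fun n => c n m
  map_add' x y := by
    ext n
    simp [PowerSeries.coeff_mk]
  map_smul' a x := by
    ext n
    simp [PowerSeries.coeff_mk]

/-- The differential `ď` on `Č = C ⊕ x⁻¹Λ[[x⁻¹]]`. -/
def checkd (F : FloerDatum Λ V) : (V × PowerSeries Λ) →ₗ[Λ] (V × PowerSeries Λ) :=
  (F.d ∘ₗ LinearMap.fst Λ V (PowerSeries Λ)).prod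
    ((toPS fun n => F.D₁ ∘ₗ (F.U ^ n)) ∘ₗ LinearMap.fst Λ V (PowerSeries Λ))

/-- The map `X̌` on `Č`. -/
def checkX (F : FloerDatum Λ V) : (V × PowerSeries Λ) →ₗ[Λ] (V × PowerSeries Λ) :=
  (F.U ∘ₗ LinearMap.fst Λ V (PowerSeries Λ)
      + F.D₂ ∘ₗ (PowerSeries.coeff (R := Λ) 0) ∘ₗ LinearMap.snd Λ V (PowerSeries Λ)).prod
    ((toPS fun n => PowerSeries.coeff (R := Λ) (n + 1)) ∘ₗ LinearMap.snd Λ V (PowerSeries Λ))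

variable {F : FloerDatum Λ V} {F' : FloerDatum Λ V'}

/-- `α ↦ Σ_{i≤-1} Δ₁(U^{-i-1} α) xⁱ`. -/
def tailDelta (G : CobordismDatum F F') : V →ₗ[Λ] PowerSeries Λ :=
  toPS fun n => G.Δ₁ ∘ₗ (F.U ^ n)

/-- `α ↦ Σ_{i≤-2} (Σ_{i+1≤j≤-1} D₁′(U′^{-j-1}(μ(U^{j-i-1} α)))) xⁱ`. -/
def tailMu (G : CobordismDatum F F') : V →ₗ[Λ] PowerSeries Λ :=
  toPS fun n => ∑ m ∈ Finset.range n, F'.D₁ ∘ₗ (F'.U ^ m) ∘ₗ G.μ ∘ₗ (F.U ^ (n - 1 - m))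

/-- The series (in nonpositive powers of `x`, i.e. a power series in `t = x⁻¹`)
`S = c + Σ_{j≤-1} Δ₁(U^{-j-1}(D₂ 1)) xʲ + Σ_{j≤-1} D₁′(U′^{-j-1}(Δ₂ 1)) xʲ
   + Σ_{j,k≤-1} D₁′(U′^{-j-1}(μ(U^{-k-1}(D₂ 1)))) x^{j+k}`. -/
def Sser (G : CobordismDatum F F') : PowerSeries Λ :=
  PowerSeries.mk fun m =>
    match m with
    | 0 => G.c
    | n + 1 =>
      G.Δ₁ ((F.U ^ n) (F.D₂ 1)) + F'.D₁ ((F'.U ^ n) (G.Δ₂ 1)) +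
        ∑ s ∈ Finset.range n, F'.D₁ ((F'.U ^ s) (G.μ ((F.U ^ (n - 1 - s)) (F.D₂ 1))))

/-- The cobordism map `ČW : Č → Č′`. -/
def checkCW (G : CobordismDatum F F') : (V × PowerSeries Λ) →ₗ[Λ] (V' × PowerSeries Λ) :=
  (G.φ ∘ₗ LinearMap.fst Λ V (PowerSeries Λ)).prod
    ((tailDelta G + tailMu G) ∘ₗ LinearMap.fst Λ V (PowerSeries Λ)
      + (LinearMap.mulRight Λ (Sser G)) ∘ₗ LinearMap.snd Λ V (PowerSeries Λ))

/-! ### Auxiliary lemmas -/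

lemma FloerDatum.pow_U_mem (F : FloerDatum Λ V) (n : ℕ) (i : ZMod 8) (v : V)
    (h : v ∈ F.gr i) : (F.U ^ n) v ∈ F.gr (i - 4 * n) := by
  induction n generalizing i v with
  | zero => simpa using h
  | succ n ih =>
    have h2 := F.U_mem _ _ (ih i v h)
    rw [pow_succ', Module.End.mul_apply]
    convert h2 using 2
    push_cast
    ring

lemma FloerDatum.beta_zero (F : FloerDatum Λ V) (n : ℕ) (a : Λ) :
    F.D₁ ((F.U ^ n) (F.D₂ a)) = 0 := by
  refine F.D₁_vanish (4 - 4 * n) ?_ _ (F.pow_U_mem n 4 _ (F.D₂_mem a))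
  have h : ∀ m : ZMod 8, (4 : ZMod 8) - 4 * m ≠ 1 := by decide
  exact h n

lemma FloerDatum.dU_eq (F : FloerDatum Λ V) :
    F.d ∘ₗ F.U = F.U ∘ₗ F.d + F.D₂ ∘ₗ F.D₁ := by
  have h := F.U_rel
  rw [sub_add_eq_add_sub, sub_eq_zero] at h
  exact h.symm

lemma FloerDatum.dU_apply (F : FloerDatum Λ V) (β : V) :
    F.d (F.U β) = F.U (F.d β) + F.D₂ (F.D₁ β) := by
  simpa using DFunLike.congr_fun F.dU_eq β

lemma FloerDatum.d_pow_zero (F : FloerDatum Λ V) (n : ℕ) (β : V) :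
    F.D₁ ((F.U ^ n) (F.d β)) = 0 := by
  induction n generalizing β with
  | zero => simpa using DFunLike.congr_fun F.D₁_d β
  | succ n ih =>
    have h3 : F.U (F.d β) = F.d (F.U β) - F.D₂ (F.D₁ β) := by
      rw [F.dU_apply]; abel
    rw [pow_succ, Module.End.mul_apply, h3, map_sub, map_sub, ih, F.beta_zero, sub_zero]

lemma CobordismDatum.Uφ_eq (G : CobordismDatum F F') :
    F'.U ∘ₗ G.φ =
      G.μ ∘ₗ F.d + F'.d ∘ₗ G.μ + G.Δ₂ ∘ₗ F.D₁ + G.φ ∘ₗ F.U - F'.D₂ ∘ₗ G.Δ₁ := by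
  have h := G.rel_U
  rw [sub_sub, sub_eq_zero] at h
  exact eq_sub_of_add_eq h.symm

lemma CobordismDatum.Uφ_apply (G : CobordismDatum F F') (α : V) :
    F'.U (G.φ α) =
      G.μ (F.d α) + F'.d (G.μ α) + G.Δ₂ (F.D₁ α) + G.φ (F.U α) - F'.D₂ (G.Δ₁ α) := by
  simpa using DFunLike.congr_fun G.Uφ_eq α

/-- The coefficient of `x^{-(s+2)}` (i.e. index `s+1`) of the series `S`. -/
def Sc (G : CobordismDatum F F') (s : ℕ) : Λ :=
  G.Δ₁ ((F.U ^ s) (F.D₂ 1)) + F'.D₁ ((F'.U ^ s) (G.Δ₂ 1)) +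
    ∑ r ∈ Finset.range s, F'.D₁ ((F'.U ^ r) (G.μ ((F.U ^ (s - 1 - r)) (F.D₂ 1))))

lemma Sser_coeff_zero (G : CobordismDatum F F') :
    PowerSeries.coeff (R := Λ) 0 (Sser G) = G.c := by
  simp [Sser]

lemma Sser_coeff_succ (G : CobordismDatum F F') (m : ℕ) :
    PowerSeries.coeff (R := Λ) (m + 1) (Sser G) = Sc G m := by
  simp [Sser, Sc]

@[simp] lemma coeff_toPS (c : ℕ → (M →ₗ[Λ] Λ)) (m : M) (n : ℕ) :
    PowerSeries.coeff (R := Λ) n (toPS c m) = c n m := by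
  show PowerSeries.coeff (R := Λ) n (PowerSeries.mk fun k => c k m) = c n m
  exact PowerSeries.coeff_mk n _

/-- The key coefficient identity. -/
lemma keyId (G : CobordismDatum F F') (n : ℕ) (α : V) :
    F'.D₁ ((F'.U ^ n) (G.φ α)) =
      G.Δ₁ ((F.U ^ n) (F.d α))
      + (∑ m ∈ Finset.range n, F'.D₁ ((F'.U ^ m) (G.μ ((F.U ^ (n - 1 - m)) (F.d α)))))
      + G.c * F.D₁ ((F.U ^ n) α)
      + ∑ s ∈ Finset.range n, F.D₁ ((F.U ^ (n - 1 - s)) α) * Sc G s := by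
  induction n generalizing α with
  | zero =>
    have h := DFunLike.congr_fun G.rel_D₁ α
    simp only [LinearMap.add_apply, LinearMap.comp_apply, LinearMap.smul_apply,
      smul_eq_mul] at h
    simpa using h.symm
  | succ n ih =>
    have hD₂ : F.D₂ (F.D₁ α) = F.D₁ α • F.D₂ 1 := by
      rw [← map_smul, smul_eq_mul, mul_one]
    have e0 : G.Δ₁ ((F.U ^ n) (F.d (F.U α))) =
        G.Δ₁ ((F.U ^ (n + 1)) (F.d α)) + F.D₁ α * G.Δ₁ ((F.U ^ n) (F.D₂ 1)) := by
      rw [F.dU_apply, map_add, map_add, ← Module.End.mul_apply (F.U ^ n) F.U, ← pow_succ,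
        hD₂, map_smul, map_smul, smul_eq_mul]
    have e1 : (∑ m ∈ Finset.range n,
          F'.D₁ ((F'.U ^ m) (G.μ ((F.U ^ (n - 1 - m)) (F.d (F.U α)))))) =
        (∑ m ∈ Finset.range n, F'.D₁ ((F'.U ^ m) (G.μ ((F.U ^ (n - m)) (F.d α)))))
        + F.D₁ α * ∑ m ∈ Finset.range n,
            F'.D₁ ((F'.U ^ m) (G.μ ((F.U ^ (n - 1 - m)) (F.D₂ 1)))) := by
      rw [Finset.mul_sum, ← Finset.sum_add_distrib]
      refine Finset.sum_congr rfl fun m hm => ?_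
      have hm' : m < n := Finset.mem_range.mp hm
      have h1 : (F.U ^ (n - 1 - m)) (F.U (F.d α)) = (F.U ^ (n - m)) (F.d α) := by
        rw [← Module.End.mul_apply, ← pow_succ]
        congr 2
        omega
      rw [F.dU_apply, map_add, h1, hD₂]
      simp only [map_add, map_smul, smul_eq_mul]
    have e2 : (∑ s ∈ Finset.range n, F.D₁ ((F.U ^ (n - 1 - s)) (F.U α)) * Sc G s) =
        ∑ s ∈ Finset.range n, F.D₁ ((F.U ^ (n - s)) α) * Sc G s := by
      refine Finset.sum_congr rfl fun s hs => ?_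
      have hs' : s < n := Finset.mem_range.mp hs
      have h1 : (F.U ^ (n - 1 - s)) (F.U α) = (F.U ^ (n - s)) α := by
        rw [← Module.End.mul_apply, ← pow_succ]
        congr 2
        omega
      rw [h1]
    have e3 : F.D₁ ((F.U ^ n) (F.U α)) = F.D₁ ((F.U ^ (n + 1)) α) := by
      rw [← Module.End.mul_apply, ← pow_succ]
    have hΔ₂ : F'.D₁ ((F'.U ^ n) (G.Δ₂ (F.D₁ α))) =
        F.D₁ α * F'.D₁ ((F'.U ^ n) (G.Δ₂ 1)) := by
      have : G.Δ₂ (F.D₁ α) = F.D₁ α • G.Δ₂ 1 := by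
        rw [← map_smul, smul_eq_mul, mul_one]
      rw [this, map_smul, map_smul, smul_eq_mul]
    rw [pow_succ, Module.End.mul_apply, G.Uφ_apply, map_sub, map_add, map_add, map_add,
      map_sub, map_add, map_add, map_add, F'.d_pow_zero, F'.beta_zero, ih (F.U α),
      e0, e1, e2, e3, hΔ₂]
    simp only [Nat.add_sub_cancel, Finset.sum_range_succ, Nat.sub_self, pow_zero,
      Module.End.one_apply, Sc]
    ring
/-- The cobordism map `ČW` is a chain map: `ď′ ∘ ČW = ČW ∘ ď`. -/
theorem stmt_9 (G : CobordismDatum F F') :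
    checkd F' ∘ₗ checkCW G = checkCW G ∘ₗ checkd F := by
  apply LinearMap.ext
  rintro ⟨α, q⟩
  simp only [LinearMap.comp_apply, checkd, checkCW, LinearMap.prod_apply, Function.prod,
    LinearMap.add_apply, LinearMap.fst_apply, LinearMap.snd_apply,
    LinearMap.mulRight_apply]
  refine Prod.ext ?_ ?_
  · simpa using (DFunLike.congr_fun G.rel_d α).symm
  · ext n
    simp only [coeff_toPS, map_add, LinearMap.comp_apply, LinearMap.add_apply,
      tailDelta, tailMu, LinearMap.sum_apply, PowerSeries.coeff_mul]
    have hs : ∀ j ∈ Finset.range n,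
        F.D₁ ((F.U ^ (n - 1 - j)) α) * PowerSeries.coeff (R := Λ) (n - (n - 1 - j)) (Sser G)
          = F.D₁ ((F.U ^ (n - 1 - j)) α) * Sc G j := by
      intro j hj
      have hj' : n - (n - 1 - j) = j + 1 := by
        have := Finset.mem_range.mp hj; omega
      rw [hj', Sser_coeff_succ]
    have hA : (∑ x ∈ Finset.HasAntidiagonal.antidiagonal n,
          F.D₁ ((F.U ^ x.1) α) * (PowerSeries.coeff (R := Λ) x.2) (Sser G))
        = G.c * F.D₁ ((F.U ^ n) α)
          + ∑ s ∈ Finset.range n, F.D₁ ((F.U ^ (n - 1 - s)) α) * Sc G s := by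
      rw [Finset.Nat.sum_antidiagonal_eq_sum_range_succ_mk, Finset.sum_range_succ]
      simp only [Nat.sub_self, Sser_coeff_zero]
      rw [← Finset.sum_range_reflect
        (fun x => F.D₁ ((F.U ^ x) α) * (PowerSeries.coeff (R := Λ) (n - x)) (Sser G)) n]
      rw [Finset.sum_congr rfl hs]
      ring
    rw [keyId G n α, hA]
    ring
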